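/- arXiv:1503.03800 — 3 statements merged into one kernel-verified Lean document; each statement's English description precedes it below -/
import Mathlib

section
/- Let Y be a nonempty set, M > 0, and for each n ≥ 1 let d_n be a metric on Y with d_n(x,y) ≤ M for all x, y ∈ Y. Assume that for each n ≥ 2, every sequence in Y that is Cauchy with respect to d_n is also Cauchy with respect to d_{n−1}. Let Z_n denote the completion of (Y, d_n) and for n ≥ 2 let π_n : Z_n → Z_{n−1} denote the continuous extension of the identity map of Y. Then d_∞ := Σ_{n≥1} 2^{−n} d_n is a metric on Y, and the completion Z of (Y, d_∞) is homeomorphic to the inverse limit lim←(Z_n, π_n) := {(z_n)_{n≥1} ∈ Π_{n≥1} Z_n : π_n(z_n) = z_{n−1} for all n ≥ 2} (with the subspace topology from the product topology), via the homeomorphism induced by sending y ∈ Y to the constant thread (y, y, y, …). -/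
/- Statement 10 (abstract form of Lemma 1.13): given uniformly bounded metrics
d_1, d_2, … on a set Y such that every d_n-Cauchy sequence is d_{n-1}-Cauchy,
the sum d_∞ = Σ_{n≥1} 2^{-n} d_n is a metric on Y, and the completion of
(Y, d_∞) is homeomorphic to the inverse limit of the completions Z_n of
(Y, d_n) along the bonding maps π_n (the continuous extensions of the identity
of Y), via the map induced by y ↦ (y, y, y, …).

Indexing convention: the family is indexed by k : ℕ, where `dn k`, `Z k`,
`ι k` correspond to the paper's d_{k+1}, Z_{k+1}, and `π k : Z (k+1) → Z k`
corresponds to the paper's π_{k+2} : Z_{k+2} → Z_{k+1}; thus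
d_∞ = Σ_{n ≥ 1} 2^{-n} d_n = Σ'_{k : ℕ} 2^{-(k+1)} dn k. -/

noncomputable section
open Set Function

theorem stmt_10 (Y : Type*) [Nonempty Y] (M : ℝ) (hM : 0 < M)
    -- the metrics d_n on Y
    (dn : ℕ → Y → Y → ℝ)
    (h_self : ∀ (k : ℕ) (x : Y), dn k x x = 0)
    (h_eq : ∀ (k : ℕ) (x y : Y), dn k x y = 0 → x = y)
    (h_symm : ∀ (k : ℕ) (x y : Y), dn k x y = dn k y x)
    (h_tri : ∀ (k : ℕ) (x y z : Y), dn k x z ≤ dn k x y + dn k y z)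
    -- the metrics are uniformly bounded by M
    (h_bdd : ∀ (k : ℕ) (x y : Y), dn k x y ≤ M)
    -- every d_{n}-Cauchy sequence is d_{n-1}-Cauchy (n ≥ 2)
    (h_cauchy : ∀ (k : ℕ) (u : ℕ → Y),
      (∀ ε > (0:ℝ), ∃ N : ℕ, ∀ p ≥ N, ∀ q ≥ N, dn (k+1) (u p) (u q) < ε) →
      (∀ ε > (0:ℝ), ∃ N : ℕ, ∀ p ≥ N, ∀ q ≥ N, dn k (u p) (u q) < ε))
    -- Z_n is the completion of (Y, d_n): a complete metric space in which Y
    -- embeds isometrically (for d_n) with dense image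
    (Z : ℕ → Type*) [∀ k, MetricSpace (Z k)] (hZc : ∀ k, CompleteSpace (Z k))
    (ι : ∀ k, Y → Z k)
    (hι : ∀ (k : ℕ) (x y : Y), dist (ι k x) (ι k y) = dn k x y)
    (hιd : ∀ k, DenseRange (ι k))
    -- π_n : Z_n → Z_{n-1} is the continuous extension of the identity of Y
    (π : ∀ k, Z (k+1) → Z k)
    (hπc : ∀ k, Continuous (π k))
    (hπι : ∀ (k : ℕ) (y : Y), π k (ι (k+1) y) = ι k y)
    -- Z is the completion of (Y, d_∞)
    (W : Type*) [MetricSpace W] [CompleteSpace W] (j : Y → W)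
    (hj : ∀ x y : Y, dist (j x) (j y) = ∑' k : ℕ, (2:ℝ)⁻¹ ^ (k+1) * dn k x y)
    (hjd : DenseRange j) :
    -- d_∞ is a metric on Y:
    ((∀ x : Y, (∑' k : ℕ, (2:ℝ)⁻¹ ^ (k+1) * dn k x x) = 0) ∧
     (∀ x y : Y, (∑' k : ℕ, (2:ℝ)⁻¹ ^ (k+1) * dn k x y) = 0 → x = y) ∧
     (∀ x y : Y, (∑' k : ℕ, (2:ℝ)⁻¹ ^ (k+1) * dn k x y)
        = ∑' k : ℕ, (2:ℝ)⁻¹ ^ (k+1) * dn k y x) ∧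
     (∀ x y z : Y, (∑' k : ℕ, (2:ℝ)⁻¹ ^ (k+1) * dn k x z)
        ≤ (∑' k : ℕ, (2:ℝ)⁻¹ ^ (k+1) * dn k x y)
          + ∑' k : ℕ, (2:ℝ)⁻¹ ^ (k+1) * dn k y z)) ∧
    -- and the completion of (Y, d_∞) is homeomorphic to the inverse limit
    -- lim← (Z_n, π_n), via the map sending y to the constant thread
    ∃ h : W ≃ₜ {z : ∀ k, Z k // ∀ k, π k (z (k+1)) = z k},
      ∀ y : Y, h (j y) = ⟨fun k => ι k y, fun k => hπι k y⟩ := by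
  
  classical
  have hdn0 : ∀ (k : ℕ) (x y : Y), 0 ≤ dn k x y := by
    intro k x y
    have h2 := h_tri k x y x
    rw [h_self, h_symm k y x] at h2
    linarith
  have hc0 : ∀ k : ℕ, (0:ℝ) < (2:ℝ)⁻¹ ^ (k+1) := fun k => by positivity
  have hsumc : Summable (fun k : ℕ => (2:ℝ)⁻¹ ^ (k+1)) := by
    simpa [pow_succ] using
      (summable_geometric_of_lt_one (by norm_num : (0:ℝ) ≤ 2⁻¹) (by norm_num)).mul_right 2⁻¹
  have htsc : (∑' k : ℕ, (2:ℝ)⁻¹ ^ (k+1)) = 1 := by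
    have h := tsum_geometric_two' 1
    have he : ∀ k : ℕ, (2:ℝ)⁻¹ ^ (k+1) = 1 / 2 / 2 ^ k := by
      intro k
      rw [pow_succ, inv_pow]
      field_simp
    calc (∑' k : ℕ, (2:ℝ)⁻¹ ^ (k+1)) = ∑' k : ℕ, 1 / 2 / 2 ^ k := tsum_congr he
      _ = 1 := h
  have hsum : ∀ x y : Y, Summable (fun k : ℕ => (2:ℝ)⁻¹ ^ (k+1) * dn k x y) := by
    intro x y
    exact Summable.of_nonneg_of_le (fun k => mul_nonneg (hc0 k).le (hdn0 k x y))
      (fun k => mul_le_mul_of_nonneg_left (h_bdd k x y) (hc0 k).le) (hsumc.mul_right M)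
  have A1 : ∀ x : Y, (∑' k : ℕ, (2:ℝ)⁻¹ ^ (k+1) * dn k x x) = 0 := by
    intro x; simp [h_self]
  have A2 : ∀ x y : Y, (∑' k : ℕ, (2:ℝ)⁻¹ ^ (k+1) * dn k x y) = 0 → x = y := by
    intro x y h
    have h0 := Summable.le_tsum (hsum x y) 0 (fun j _ => mul_nonneg (hc0 j).le (hdn0 j x y))
    rw [h] at h0
    have hd := hdn0 0 x y
    have hpos := hc0 0
    have hle : dn 0 x y ≤ 0 := by nlinarith
    exact h_eq 0 x y (le_antisymm hle hd)
  have A3 : ∀ x y : Y, (∑' k : ℕ, (2:ℝ)⁻¹ ^ (k+1) * dn k x y)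
      = ∑' k : ℕ, (2:ℝ)⁻¹ ^ (k+1) * dn k y x :=
    fun x y => tsum_congr fun k => by rw [h_symm]
  have A4 : ∀ x y z : Y, (∑' k : ℕ, (2:ℝ)⁻¹ ^ (k+1) * dn k x z)
      ≤ (∑' k : ℕ, (2:ℝ)⁻¹ ^ (k+1) * dn k x y) + ∑' k : ℕ, (2:ℝ)⁻¹ ^ (k+1) * dn k y z := by
    intro x y z
    calc (∑' k : ℕ, (2:ℝ)⁻¹ ^ (k+1) * dn k x z)
        ≤ ∑' k : ℕ, ((2:ℝ)⁻¹ ^ (k+1) * dn k x y + (2:ℝ)⁻¹ ^ (k+1) * dn k y z) := by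
          refine Summable.tsum_le_tsum (fun k => ?_) (hsum x z) ((hsum x y).add (hsum y z))
          rw [← mul_add]
          exact mul_le_mul_of_nonneg_left (h_tri k x y z) (hc0 k).le
      _ = _ := Summable.tsum_add (hsum x y) (hsum y z)
  refine ⟨⟨A1, A2, A3, A4⟩, ?_⟩
  haveI := hZc
  letI instY : MetricSpace Y :=
    { dist := fun x y => ∑' k : ℕ, (2:ℝ)⁻¹ ^ (k+1) * dn k x y
      dist_self := A1
      dist_comm := A3
      dist_triangle := fun x y z => A4 x y z
      eq_of_dist_eq_zero := fun {x y} h => A2 x y h }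
  have hdistY : ∀ x y : Y, dist x y = ∑' k : ℕ, (2:ℝ)⁻¹ ^ (k+1) * dn k x y := fun x y => rfl
  have hjiso : Isometry j := Isometry.of_dist_eq fun x y => hj x y
  have hui : IsUniformInducing j := hjiso.isUniformInducing
  have hdi : IsDenseInducing j := hui.isDenseInducing hjd
  have hdnle : ∀ (k : ℕ) (x y : Y), dn k x y ≤ (2:ℝ) ^ (k+1) * dist x y := by
    intro k x y
    have h0 := Summable.le_tsum (hsum x y) k (fun j _ => mul_nonneg (hc0 j).le (hdn0 j x y))
    have h1 : ((2:ℝ)) ^ (k+1) * ((2:ℝ)⁻¹ ^ (k+1) * dn k x y) = dn k x y := by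
      rw [← mul_assoc, ← mul_pow]; norm_num
    calc dn k x y = (2:ℝ) ^ (k+1) * ((2:ℝ)⁻¹ ^ (k+1) * dn k x y) := h1.symm
      _ ≤ (2:ℝ) ^ (k+1) * dist x y := by
          rw [hdistY]
          exact mul_le_mul_of_nonneg_left h0 (by positivity)
  have hιuc : ∀ k, UniformContinuous (ι k) := by
    intro k
    have hL : LipschitzWith ((2:NNReal) ^ (k+1)) (ι k) := by
      apply LipschitzWith.of_dist_le_mul
      intro x y
      rw [hι]
      calc dn k x y ≤ (2:ℝ) ^ (k+1) * dist x y := hdnle k x y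
        _ = ((2:NNReal) ^ (k+1) : ℝ) * dist x y := by push_cast; ring
    exact hL.uniformContinuous
  let f : ∀ k, W → Z k := fun k => hdi.extend (ι k)
  have hfj : ∀ (k : ℕ) (y : Y), f k (j y) = ι k y := fun k y =>
    hdi.extend_eq (hιuc k).continuous y
  have hfc : ∀ k, Continuous (f k) := fun k =>
    (uniformContinuous_uniformly_extend hui hjd (hιuc k)).continuous
  have hthread : ∀ k, (π k) ∘ (f (k+1)) = f k := by
    intro k
    apply hjd.equalizer ((hπc k).comp (hfc (k+1))) (hfc k)
    funext y
    simp [Function.comp, hfj, hπι]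
  have hcle : ∀ N : ℕ, (∑ m ∈ Finset.range N, (2:ℝ)⁻¹ ^ (m+1)) ≤ 1 := by
    intro N
    have h := Summable.sum_le_tsum (Finset.range N) (fun i _ => (hc0 i).le) hsumc
    rw [htsc] at h; exact h
  have hDtail : ∀ (x y : Y) (N : ℕ),
      (∑' k : ℕ, (2:ℝ)⁻¹ ^ (k+1) * dn k x y)
        ≤ (∑ m ∈ Finset.range N, (2:ℝ)⁻¹ ^ (m+1) * dn m x y) + (2:ℝ)⁻¹ ^ N * M := by
    intro x y N
    have hs := hsum x y
    have htail : (∑' k : ℕ, (2:ℝ)⁻¹ ^ (k + N + 1) * dn (k + N) x y) ≤ (2:ℝ)⁻¹ ^ N * M := by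
      have hb : ∀ k : ℕ, (2:ℝ)⁻¹ ^ (k + N + 1) * dn (k + N) x y
          ≤ (2:ℝ)⁻¹ ^ N * ((2:ℝ)⁻¹ ^ (k+1) * M) := by
        intro k
        have h1 : (2:ℝ)⁻¹ ^ (k + N + 1) = (2:ℝ)⁻¹ ^ N * (2:ℝ)⁻¹ ^ (k+1) := by
          rw [show k + N + 1 = N + (k+1) by ring, pow_add]
        rw [h1, mul_assoc]
        exact mul_le_mul_of_nonneg_left
          (mul_le_mul_of_nonneg_left (h_bdd _ x y) (hc0 k).le) (by positivity)
      have hsa : Summable (fun k : ℕ => (2:ℝ)⁻¹ ^ (k + N + 1) * dn (k + N) x y) :=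
        (summable_nat_add_iff N).2 hs
      calc (∑' k : ℕ, (2:ℝ)⁻¹ ^ (k + N + 1) * dn (k + N) x y)
          ≤ ∑' k : ℕ, (2:ℝ)⁻¹ ^ N * ((2:ℝ)⁻¹ ^ (k+1) * M) :=
            Summable.tsum_le_tsum hb hsa ((hsumc.mul_right M).mul_left _)
        _ = (2:ℝ)⁻¹ ^ N * ((∑' k : ℕ, (2:ℝ)⁻¹ ^ (k+1)) * M) := by
            rw [tsum_mul_left, tsum_mul_right]
        _ = (2:ℝ)⁻¹ ^ N * M := by rw [htsc, one_mul]
    calc (∑' k : ℕ, (2:ℝ)⁻¹ ^ (k+1) * dn k x y)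
        = (∑ m ∈ Finset.range N, (2:ℝ)⁻¹ ^ (m+1) * dn m x y)
          + ∑' k : ℕ, (2:ℝ)⁻¹ ^ (k + N + 1) * dn (k + N) x y :=
          (Summable.sum_add_tsum_nat_add N hs).symm
      _ ≤ _ := add_le_add_right htail _
  have hstar : ∀ (N : ℕ) (w w' : W),
      dist w w' ≤ (∑ m ∈ Finset.range N, (2:ℝ)⁻¹ ^ (m+1) * dist (f m w) (f m w'))
        + (2:ℝ)⁻¹ ^ N * M := by
    intro N w w'
    have hclosed : IsClosed {q : W × W | dist q.1 q.2
        ≤ (∑ m ∈ Finset.range N, (2:ℝ)⁻¹ ^ (m+1) * dist (f m q.1) (f m q.2))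
          + (2:ℝ)⁻¹ ^ N * M} := by
      apply isClosed_le continuous_dist
      apply Continuous.add _ continuous_const
      apply continuous_finset_sum
      intro m _
      exact continuous_const.mul
        (((hfc m).comp continuous_fst).dist ((hfc m).comp continuous_snd))
    have hbase : ∀ q : Y × Y, dist (j q.1) (j q.2)
        ≤ (∑ m ∈ Finset.range N, (2:ℝ)⁻¹ ^ (m+1) * dist (f m (j q.1)) (f m (j q.2)))
          + (2:ℝ)⁻¹ ^ N * M := by
      intro q
      rw [hj]
      simp only [hfj, hι]
      exact hDtail q.1 q.2 N
    exact (hjd.prodMap hjd).induction_on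
      (p := fun q : W × W => dist q.1 q.2
        ≤ (∑ m ∈ Finset.range N, (2:ℝ)⁻¹ ^ (m+1) * dist (f m q.1) (f m q.2))
          + (2:ℝ)⁻¹ ^ N * M) (w, w') hclosed hbase
  let F : W → {z : ∀ k, Z k // ∀ k, π k (z (k+1)) = z k} :=
    fun w => ⟨fun k => f k w, fun k => congrFun (hthread k) w⟩
  have hFc : Continuous F := Continuous.subtype_mk (continuous_pi fun k => hfc k) _
  have hlim0 : Filter.Tendsto (fun N : ℕ => (2:ℝ)⁻¹ ^ N * M) Filter.atTop (nhds 0) := by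
    simpa using
      (tendsto_pow_atTop_nhds_zero_of_lt_one (by norm_num : (0:ℝ) ≤ 2⁻¹)
        (by norm_num : (2:ℝ)⁻¹ < 1)).mul_const M
  have hFinj : Function.Injective F := by
    intro w w' hww
    have hm : ∀ m, f m w = f m w' := fun m => congrFun (congrArg Subtype.val hww) m
    have hNle : ∀ N : ℕ, dist w w' ≤ (2:ℝ)⁻¹ ^ N * M := by
      intro N
      have h := hstar N w w'
      simpa [hm] using h
    have hle0 : dist w w' ≤ 0 := ge_of_tendsto' hlim0 hNle
    exact dist_le_zero.1 hle0
  have hFsurj : Function.Surjective F := by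
    rintro ⟨zf, hz⟩
    have claim : ∀ k : ℕ, ∀ δ > (0:ℝ), ∃ U : Set (Z k), IsOpen U ∧ zf k ∈ U ∧
        ∀ y : Y, ι k y ∈ U → ∀ m ≤ k, dist (ι m y) (zf m) < δ := by
      intro k
      induction k with
      | zero =>
        intro δ hδ
        refine ⟨Metric.ball (zf 0) δ, Metric.isOpen_ball, Metric.mem_ball_self hδ, ?_⟩
        intro y hy m hm
        obtain rfl : m = 0 := Nat.le_zero.mp hm
        simpa [Metric.mem_ball] using hy
      | succ k ih =>
        intro δ hδ
        obtain ⟨U, hUo, hUz, hU⟩ := ih δ hδ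
        refine ⟨π k ⁻¹' U ∩ Metric.ball (zf (k+1)) δ,
          (hUo.preimage (hπc k)).inter Metric.isOpen_ball,
          ⟨by rw [Set.mem_preimage, hz k]; exact hUz, Metric.mem_ball_self hδ⟩, ?_⟩
        intro y hy m hm
        rcases eq_or_lt_of_le hm with rfl | hlt
        · simpa [Metric.mem_ball] using hy.2
        · have hmk : m ≤ k := Nat.lt_succ_iff.mp hlt
          have : ι k y ∈ U := by
            have := hy.1
            rwa [Set.mem_preimage, hπι] at this
          exact hU y this m hmk
    have hy : ∀ k : ℕ, ∃ y : Y, ∀ m ≤ k, dist (ι m y) (zf m) < (2:ℝ)⁻¹ ^ k := by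
      intro k
      obtain ⟨U, hUo, hUz, hU⟩ := claim k ((2:ℝ)⁻¹ ^ k) (by positivity)
      obtain ⟨y, hyU⟩ := (hιd k).exists_mem_open hUo ⟨zf k, hUz⟩
      exact ⟨y, hU y hyU⟩
    choose y hy using hy
    have hcau : CauchySeq (fun k => j (y k)) := by
      apply cauchySeq_of_le_tendsto_0 (fun N => 2 * (2:ℝ)⁻¹ ^ N + (2:ℝ)⁻¹ ^ N * M)
      · intro p q N hp hq
        have hD := hDtail (y p) (y q) N
        have hsumb : (∑ m ∈ Finset.range N, (2:ℝ)⁻¹ ^ (m+1) * dn m (y p) (y q))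
            ≤ (∑ m ∈ Finset.range N, (2:ℝ)⁻¹ ^ (m+1)) * (2 * (2:ℝ)⁻¹ ^ N) := by
          rw [Finset.sum_mul]
          apply Finset.sum_le_sum
          intro m hm
          have hmN : m < N := Finset.mem_range.mp hm
          have hd : dn m (y p) (y q) ≤ 2 * (2:ℝ)⁻¹ ^ N := by
            have e1 := hy p m (le_trans hmN.le hp)
            have e2 := hy q m (le_trans hmN.le hq)
            have ht := dist_triangle (ι m (y p)) (zf m) (ι m (y q))
            rw [dist_comm (zf m) (ι m (y q))] at ht
            have hιe : dist (ι m (y p)) (ι m (y q)) = dn m (y p) (y q) := hι m _ _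
            have hp' : (2:ℝ)⁻¹ ^ p ≤ (2:ℝ)⁻¹ ^ N :=
              pow_le_pow_of_le_one (by norm_num) (by norm_num) hp
            have hq' : (2:ℝ)⁻¹ ^ q ≤ (2:ℝ)⁻¹ ^ N :=
              pow_le_pow_of_le_one (by norm_num) (by norm_num) hq
            linarith
          exact mul_le_mul_of_nonneg_left hd (hc0 m).le
        have hpw : (0:ℝ) < (2:ℝ)⁻¹ ^ N := by positivity
        have hc1 := hcle N
        have hc2 : (0:ℝ) ≤ ∑ m ∈ Finset.range N, (2:ℝ)⁻¹ ^ (m+1) :=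
          Finset.sum_nonneg fun i _ => (hc0 i).le
        calc dist (j (y p)) (j (y q)) = dist (y p) (y q) := hjiso.dist_eq _ _
          _ = ∑' k : ℕ, (2:ℝ)⁻¹ ^ (k+1) * dn k (y p) (y q) := hdistY _ _
          _ ≤ 2 * (2:ℝ)⁻¹ ^ N + (2:ℝ)⁻¹ ^ N * M := by nlinarith
      · simpa using
          (((tendsto_pow_atTop_nhds_zero_of_lt_one (by norm_num : (0:ℝ) ≤ 2⁻¹)
            (by norm_num : (2:ℝ)⁻¹ < 1)).const_mul 2).add hlim0)
    obtain ⟨w, hw⟩ := cauchySeq_tendsto_of_complete hcau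
    refine ⟨w, Subtype.ext (funext fun m => ?_)⟩
    show f m w = zf m
    have h1 : Filter.Tendsto (fun k => f m (j (y k))) Filter.atTop (nhds (f m w)) :=
      ((hfc m).tendsto w).comp hw
    have h1' : Filter.Tendsto (fun k => ι m (y k)) Filter.atTop (nhds (f m w)) := by
      simpa [hfj] using h1
    have h2 : Filter.Tendsto (fun k => ι m (y k)) Filter.atTop (nhds (zf m)) := by
      rw [Metric.tendsto_atTop]
      intro ε hε
      obtain ⟨N, hN⟩ := exists_pow_lt_of_lt_one hε (by norm_num : (2:ℝ)⁻¹ < 1)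
      refine ⟨max m N, fun k hk => ?_⟩
      have h3 := hy k m (le_trans (le_max_left _ _) hk)
      have h4 : (2:ℝ)⁻¹ ^ k ≤ (2:ℝ)⁻¹ ^ N :=
        pow_le_pow_of_le_one (by norm_num) (by norm_num) (le_trans (le_max_right _ _) hk)
      linarith
    exact tendsto_nhds_unique h1' h2
  let e : W ≃ {z : ∀ k, Z k // ∀ k, π k (z (k+1)) = z k} :=
    Equiv.ofBijective F ⟨hFinj, hFsurj⟩
  have hGc : Continuous e.symm := by
    rw [continuous_iff_continuousAt]
    intro z₀
    apply Metric.tendsto_nhds.mpr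
    intro ε hε
    obtain ⟨N, hN⟩ := (hlim0.eventually (gt_mem_nhds (by linarith : (0:ℝ) < ε/2))).exists
    have hev : ∀ᶠ z : {z : ∀ k, Z k // ∀ k, π k (z (k+1)) = z k} in nhds z₀,
        ∀ m ∈ Finset.range N, dist (z.1 m) (z₀.1 m) < ε/2 := by
      rw [Filter.eventually_all_finset]
      intro m _
      have hcm : Continuous (fun z : {z : ∀ k, Z k // ∀ k, π k (z (k+1)) = z k} =>
          z.1 m) := (continuous_apply m).comp continuous_subtype_val
      exact (Metric.tendsto_nhds.1 (hcm.continuousAt (x := z₀))) (ε/2) (by linarith)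
    filter_upwards [hev] with z hzd
    have hfz : ∀ m, f m (e.symm z) = z.1 m := by
      intro m
      have h : F (e.symm z) = z := e.apply_symm_apply z
      exact congrFun (congrArg Subtype.val h) m
    have hfz₀ : ∀ m, f m (e.symm z₀) = z₀.1 m := by
      intro m
      have h : F (e.symm z₀) = z₀ := e.apply_symm_apply z₀
      exact congrFun (congrArg Subtype.val h) m
    have key := hstar N (e.symm z) (e.symm z₀)
    have hb : (∑ m ∈ Finset.range N, (2:ℝ)⁻¹ ^ (m+1) * dist (f m (e.symm z)) (f m (e.symm z₀)))
        ≤ ε/2 := by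
      calc (∑ m ∈ Finset.range N, (2:ℝ)⁻¹ ^ (m+1) * dist (f m (e.symm z)) (f m (e.symm z₀)))
          ≤ ∑ m ∈ Finset.range N, (2:ℝ)⁻¹ ^ (m+1) * (ε/2) := by
            apply Finset.sum_le_sum
            intro m hm
            rw [hfz, hfz₀]
            exact mul_le_mul_of_nonneg_left (le_of_lt (hzd m hm)) (hc0 m).le
        _ = (∑ m ∈ Finset.range N, (2:ℝ)⁻¹ ^ (m+1)) * (ε/2) := by rw [Finset.sum_mul]
        _ ≤ 1 * (ε/2) := mul_le_mul_of_nonneg_right (hcle N) (by linarith)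
        _ = ε/2 := one_mul _
    calc dist (e.symm z) (e.symm z₀)
        ≤ _ := key
      _ < ε := by linarith
  refine ⟨{ toEquiv := e, continuous_toFun := hFc, continuous_invFun := hGc }, ?_⟩
  intro y
  exact Subtype.ext (funext fun k => hfj k y)
end
end

section
/- Let X and Z be compact metric spaces, let φ : X → X be a minimal homeomorphism (every φ-orbit is dense in X), let ζ : Z → Z be a homeomorphism, and let q : Z → X be a continuous map satisfying q ∘ ζ = φ ∘ q. Suppose there is a dense subset D ⊆ Z such that q^{−1}({q(z)}) = {z} for every z ∈ D. Then ζ is minimal; that is, every nonempty closed subset Y ⊆ Z with ζ(Y) = Y equals Z (equivalently, every ζ-orbit is dense in Z). -/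
/- Statement 18 (abstract mechanism behind Theorem 1.19): minimality lifts
along a factor map q : (Z, ζ) → (X, φ) which is injective over a dense set:
if q⁻¹{q(z)} = {z} for all z in a dense subset D ⊆ Z, then ζ is minimal. -/

open Set

lemma perm_zpow_succ {Y : Type*} (f : Equiv.Perm Y) (n : ℤ) (x : Y) :
    (f ^ (n + 1)) x = f ((f ^ n) x) := by
  rw [add_comm, zpow_one_add, Equiv.Perm.mul_apply]

lemma orbit_mem {Y : Type*} (f : Equiv.Perm Y) (K : Set Y) (hK : f '' K = K)
    {x : Y} (hx : x ∈ K) : ∀ n : ℤ, (f ^ n) x ∈ K := by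
  have hfwd : ∀ y ∈ K, f y ∈ K := fun y hy => hK ▸ ⟨y, hy, rfl⟩
  have hbwd : ∀ y ∈ K, f.symm y ∈ K := by
    intro y hy
    rw [← hK] at hy
    obtain ⟨w, hw, rfl⟩ := hy
    simpa using hw
  intro n
  induction n using Int.induction_on with
  | zero => simpa using hx
  | succ n ih =>
      rw [perm_zpow_succ]; exact hfwd _ ih
  | pred n ih =>
      have h : (f ^ (-(n : ℤ) - 1)) x = f.symm ((f ^ (-(n : ℤ))) x) := by
        rw [sub_eq_add_neg, add_comm, zpow_add, Equiv.Perm.mul_apply]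
        simp [Equiv.Perm.inv_def]
      rw [h]; exact hbwd _ ih

lemma closed_inv_univ {Y : Type*} [TopologicalSpace Y] (f : Y ≃ₜ Y)
    (hmin : ∀ y : Y, Dense (Set.range fun n : ℤ => (f.toEquiv ^ n) y))
    (K : Set Y) (hne : K.Nonempty) (hcl : IsClosed K) (hinv : ⇑f '' K = K) :
    K = Set.univ := by
  obtain ⟨x, hx⟩ := hne
  have horb : Set.range (fun n : ℤ => (f.toEquiv ^ n) x) ⊆ K := by
    rintro _ ⟨n, rfl⟩
    exact orbit_mem f.toEquiv K hinv hx n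
  have hd : Dense K := (hmin x).mono horb
  rw [← hcl.closure_eq, hd.closure_eq]

theorem stmt_18 {X Z : Type*}
    [MetricSpace X] [CompactSpace X] [MetricSpace Z] [CompactSpace Z]
    (φ : X ≃ₜ X)
    -- φ is minimal: every orbit is dense
    (hφmin : ∀ x : X, Dense (Set.range fun n : ℤ => (φ.toEquiv ^ n) x))
    (ζ : Z ≃ₜ Z) (q : Z → X) (hq : Continuous q)
    (hfactor : ∀ z : Z, q (ζ z) = φ (q z))
    (D : Set Z) (hD : Dense D)
    (hinj : ∀ z ∈ D, q ⁻¹' {q z} = {z}) :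
    -- ζ is minimal
    (∀ C : Set Z, C.Nonempty → IsClosed C → ζ '' C = C → C = Set.univ) ∧
    (∀ z : Z, Dense (Set.range fun n : ℤ => (ζ.toEquiv ^ n) z)) := by
  have part1 : ∀ C : Set Z, C.Nonempty → IsClosed C → ζ '' C = C → C = Set.univ := by
    intro C hne hcl hCinv
    have hKc : IsClosed (q '' C) := (hcl.isCompact.image hq).isClosed
    have hKinv : ⇑φ '' (q '' C) = q '' C := by
      rw [← Set.image_comp]
      have : (⇑φ ∘ q) = q ∘ ⇑ζ := by funext z; exact (hfactor z).symm
      rw [this, Set.image_comp, hCinv]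
    have hKuniv : q '' C = Set.univ :=
      closed_inv_univ φ hφmin (q '' C) (hne.image q) hKc hKinv
    have hDC : D ⊆ C := by
      intro z hz
      have : q z ∈ q '' C := hKuniv ▸ Set.mem_univ _
      obtain ⟨c, hc, hqc⟩ := this
      have : c ∈ q ⁻¹' {q z} := by simp [hqc]
      rw [hinj z hz] at this
      rwa [← this]
    have : Dense C := hD.mono hDC
    rw [← hcl.closure_eq, this.closure_eq]
  refine ⟨part1, fun z => ?_⟩
  set S := Set.range (fun n : ℤ => (ζ.toEquiv ^ n) z) with hS
  have hSinv : ⇑ζ '' S = S := by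
    ext y
    constructor
    · rintro ⟨_, ⟨n, rfl⟩, rfl⟩
      exact ⟨n + 1, perm_zpow_succ ζ.toEquiv n z⟩
    · rintro ⟨n, rfl⟩
      have h := perm_zpow_succ ζ.toEquiv (n - 1) z
      rw [sub_add_cancel] at h
      exact ⟨(ζ.toEquiv ^ (n - 1)) z, ⟨n - 1, rfl⟩, h.symm⟩
  have hKinv : ⇑ζ '' closure S = closure S := by
    rw [ζ.image_closure, hSinv]
  have : closure S = Set.univ :=
    part1 (closure S) ⟨z, subset_closure ⟨0, by simp⟩⟩ isClosed_closure hKinv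
  rwa [dense_iff_closure_eq]
end

section
/- Let X be a compact Hausdorff space, let φ : X → X be a minimal homeomorphism (every φ-orbit is dense in X), let n ≥ 1, and let λ : [0,1] → X be a continuous map such that ⋃_{i=0}^{n−1} φ^i(λ([0,1])) ≠ X. Then there exists an integer k ≥ 2 such that there is no tuple (s_1, …, s_k) ∈ [0,1]^k satisfying φ^n(λ(s_i)) = λ(s_{i+1}) for all 1 ≤ i < k. -/
/- Statement 19 (first claim in the proof of Lemma 1.1): if φ is a minimal
homeomorphism of a compact Hausdorff space X and λ : [0,1] → X is continuous
with ⋃_{i=0}^{n-1} φ^i(λ([0,1])) ≠ X, then for some k ≥ 2 there is no chain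
(s_1, …, s_k) ∈ [0,1]^k with φ^n(λ(s_i)) = λ(s_{i+1}) for 1 ≤ i < k. -/

open Set

theorem stmt_19 {X : Type*} [TopologicalSpace X] [CompactSpace X] [T2Space X]
    (φ : X ≃ₜ X)
    -- φ is minimal: every orbit is dense
    (hφmin : ∀ x : X, Dense (Set.range fun m : ℤ => (φ.toEquiv ^ m) x))
    (n : ℕ) (hn : 1 ≤ n)
    (lam : ℝ → X) (hlam : ContinuousOn lam (Icc 0 1))
    (hproper : (⋃ i ∈ Finset.range n, (⇑φ)^[i] '' (lam '' Icc 0 1)) ≠ Set.univ) :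
    ∃ k : ℕ, 2 ≤ k ∧
      ¬∃ s : Fin k → ℝ, (∀ i : Fin k, s i ∈ Icc (0:ℝ) 1) ∧
        ∀ (i : Fin k) (h : (i : ℕ) + 1 < k),
          (⇑φ)^[n] (lam (s i)) = lam (s ⟨(i : ℕ) + 1, h⟩) := by
  by_contra hcon
  push_neg at hcon
  set K : Set X := lam '' Icc 0 1 with hKdef
  have hKcomp : IsCompact K := isCompact_Icc.image_of_continuousOn hlam
  have hKcl : IsClosed K := hKcomp.isClosed
  set S : Set X := ⋃ i ∈ Finset.range n, (⇑φ)^[i] '' K with hSdef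
  have hScl : IsClosed S := by
    apply Set.Finite.isClosed_biUnion (Finset.finite_toSet _)
    intro i _
    exact (hKcomp.image (φ.continuous.iterate i)).isClosed
  -- chains give points with long forward K-returns
  have hV : ∀ k : ℕ, ∃ x, ∀ j ≤ k, (⇑φ)^[n*j] x ∈ K := by
    intro k
    obtain ⟨s, hs, hchain⟩ := hcon (k+2) (by omega)
    refine ⟨lam (s ⟨0, by omega⟩), ?_⟩
    have key : ∀ j, ∀ (hj : j < k+2),
        (⇑φ)^[n*j] (lam (s ⟨0, by omega⟩)) = lam (s ⟨j, hj⟩) := by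
      intro j
      induction j with
      | zero => intro hj; simp
      | succ j ih =>
        intro hj
        have hj' : j < k + 2 := by omega
        have hc := hchain ⟨j, hj'⟩ (by simpa using hj)
        have : n * (j+1) = n + n * j := by ring
        rw [this, Function.iterate_add_apply, ih hj']
        exact hc
    intro j hj
    rw [key j (by omega)]
    exact ⟨s ⟨j, by omega⟩, hs _, rfl⟩
  -- nested closed sets of points returning to K
  set V : ℕ → Set X := fun k => ⋂ j : Fin (k+1), (⇑φ)^[n*(j:ℕ)] ⁻¹' K with hVdef
  have hVcl : ∀ k, IsClosed (V k) := by
    intro k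
    exact isClosed_iInter fun j => hKcl.preimage (φ.continuous.iterate _)
  have hVanti : ∀ k, V (k+1) ⊆ V k := by
    intro k x hx
    simp only [hVdef, mem_iInter] at hx ⊢
    intro j
    exact hx ⟨j, by omega⟩
  have hVne : ∀ k, (V k).Nonempty := by
    intro k
    obtain ⟨x, hx⟩ := hV k
    refine ⟨x, ?_⟩
    simp only [hVdef, mem_iInter]
    intro j
    exact hx j (by omega)
  obtain ⟨x, hx⟩ := IsCompact.nonempty_iInter_of_sequence_nonempty_isCompact_isClosed
    V hVanti hVne ((hVcl 0).isCompact) hVcl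
  have hxK : ∀ j : ℕ, (⇑φ)^[n*j] x ∈ K := by
    intro j
    have := mem_iInter.1 hx j
    simpa [hVdef] using (mem_iInter.1 (mem_iInter.1 hx j) ⟨j, by omega⟩)
  -- forward orbit of x lies in S
  have hforb : ∀ m : ℕ, (⇑φ)^[m] x ∈ S := by
    intro m
    have hm : n * (m / n) + m % n = m := Nat.div_add_mod m n
    have hr : m % n < n := Nat.mod_lt _ (by omega)
    have : (⇑φ)^[m] x = (⇑φ)^[m % n] ((⇑φ)^[n * (m/n)] x) := by
      conv_lhs => rw [← hm, add_comm, Function.iterate_add_apply]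
    rw [this]
    refine mem_iUnion₂.2 ⟨m % n, Finset.mem_range.2 hr, ?_⟩
    exact ⟨_, hxK (m/n), rfl⟩
  -- closure of forward orbit
  set Y : Set X := closure (Set.range fun m : ℕ => (⇑φ)^[m] x) with hYdef
  have hYS : Y ⊆ S := closure_minimal (by rintro _ ⟨m, rfl⟩; exact hforb m) hScl
  have hxY : x ∈ Y := subset_closure ⟨0, rfl⟩
  have hYcl : IsClosed Y := isClosed_closure
  have hYcomp : IsCompact Y := hYcl.isCompact
  have hmaps : Set.MapsTo (⇑φ) Y Y := by
    intro y hy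
    have h1 : ⇑φ '' Y ⊆ closure (⇑φ '' (Set.range fun m : ℕ => (⇑φ)^[m] x)) :=
      image_closure_subset_closure_image φ.continuous
    have h2 : ⇑φ '' (Set.range fun m : ℕ => (⇑φ)^[m] x) ⊆
        (Set.range fun m : ℕ => (⇑φ)^[m] x) := by
      rintro _ ⟨_, ⟨m, rfl⟩, rfl⟩
      exact ⟨m+1, by simp [Function.iterate_succ_apply']⟩
    exact closure_mono h2 (h1 ⟨y, hy, rfl⟩)
  -- the intersection of forward images of Y
  set W : ℕ → Set X := fun j => (⇑φ)^[j] '' Y with hWdef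
  have hWcomp : ∀ j, IsCompact (W j) := fun j => hYcomp.image (φ.continuous.iterate j)
  have hWcl : ∀ j, IsClosed (W j) := fun j => (hWcomp j).isClosed
  have hWanti : ∀ j, W (j+1) ⊆ W j := by
    intro j
    have : (⇑φ)^[j+1] '' Y = (⇑φ)^[j] '' (⇑φ '' Y) := by
      rw [← Set.image_comp, ← Function.iterate_succ]
    simp only [hWdef, this]
    exact Set.image_mono hmaps.image_subset
  have hWne : ∀ j, (W j).Nonempty := fun j => ⟨_, x, hxY, rfl⟩
  obtain ⟨z, hz⟩ := IsCompact.nonempty_iInter_of_sequence_nonempty_isCompact_isClosed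
    W hWanti hWne (hWcomp 0) hWcl
  have hzW : ∀ j : ℕ, z ∈ (⇑φ)^[j] '' Y := fun j => mem_iInter.1 hz j
  have hzY : z ∈ Y := by simpa using hzW 0
  -- pow / iterate compatibility
  have hpow : ∀ (j : ℕ) (w : X), (φ.toEquiv ^ j) w = (⇑φ)^[j] w := by
    intro j
    induction j with
    | zero => intro w; simp
    | succ j ih =>
      intro w
      rw [pow_succ', Equiv.Perm.mul_apply, ih, Function.iterate_succ_apply']
      rfl
  -- the full ℤ-orbit of z lies in Y
  have horb : ∀ m : ℤ, (φ.toEquiv ^ m) z ∈ Y := by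
    intro m
    rcases m with j | j
    · rw [Int.ofNat_eq_coe, zpow_natCast, hpow]
      exact (hmaps.iterate j) hzY
    · obtain ⟨w, hwY, hw⟩ := hzW (j+1)
      have hz' : (φ.toEquiv ^ (j+1 : ℕ)) w = z := by rw [hpow]; exact hw
      have : (φ.toEquiv ^ Int.negSucc j) z = w := by
        have hcast : (-(↑j + 1) : ℤ) = -((j+1 : ℕ) : ℤ) := by push_cast; ring
        rw [Int.negSucc_eq, hcast, zpow_neg, ← hz', zpow_natCast]
        simp
      rw [this]; exact hwY
  -- density gives a contradiction
  have hdense := hφmin z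
  have hYuniv : Y = Set.univ := by
    apply Set.eq_univ_of_univ_subset
    rw [← hdense.closure_eq]
    exact closure_minimal (by rintro _ ⟨m, rfl⟩; exact horb m) hYcl
  exact hproper (Set.eq_univ_of_univ_subset (hYuniv ▸ hYS))
end
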